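/- Let A be a Sidon set in Z_n partitioned into A_1 and A_2, and let G be the 4-partite graph with vertex classes X_{00}, X_{01}, X_{10}, X_{11}, each a copy of Z_n, where x ∈ X_{00} is joined to x+a_1 ∈ X_{10} (colour (a_1,1)) for a_1 ∈ A_1, x ∈ X_{00} to x+a_2 ∈ X_{01} (colour (a_2,2)) for a_2 ∈ A_2, x ∈ X_{10} to x+a_2 ∈ X_{11} (colour (a_2,2)) for a_2 ∈ A_2, and x ∈ X_{01} to x+a_1 ∈ X_{11} (colour (a_1,1)) for a_1 ∈ A_1. Then G is properly edge-coloured and contains no rainbow 4-cycle. -/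

import Mathlib

open SimpleGraph

/-- A colouring of (potential) edges is proper on `G` if no two distinct edges of `G`
sharing a vertex receive the same colour. -/
def ProperColoring {V γ : Type*} (G : SimpleGraph V) (c : Sym2 V → γ) : Prop :=
  ∀ e f : Sym2 V, e ∈ G.edgeSet → f ∈ G.edgeSet → e ≠ f → (∃ v, v ∈ e ∧ v ∈ f) → c e ≠ c f

/-- `G` (with colouring `c`) contains a rainbow cycle of length `t`. -/
def HasRainbowCycle {V γ : Type*} (G : SimpleGraph V) (c : Sym2 V → γ) (t : ℕ) : Prop :=
  ∃ (u : V) (w : G.Walk u u), w.IsCycle ∧ w.length = t ∧ (w.edges.map c).Nodup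

/-- Vertex type of the Sidon-set construction: four classes `X_{00}, X_{01}, X_{10}, X_{11}`,
each a copy of `ZMod n`. -/
abbrev SidonV (n : ℕ) := (Fin 2 × Fin 2) × ZMod n

/-- The "rank" of a class: `X_{00}` has rank 0, `X_{10}`, `X_{01}` rank 1, `X_{11}` rank 2. -/
def sidonRank {n : ℕ} (v : SidonV n) : ℕ := v.1.1.val + v.1.2.val

/-- The (oriented) edge relation of the Sidon construction. -/
def sidonRel {n : ℕ} (A1 A2 : Finset (ZMod n)) (u v : SidonV n) : Prop :=
  (u.1 = (0, 0) ∧ v.1 = (1, 0) ∧ v.2 - u.2 ∈ A1) ∨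
  (u.1 = (0, 0) ∧ v.1 = (0, 1) ∧ v.2 - u.2 ∈ A2) ∨
  (u.1 = (1, 0) ∧ v.1 = (1, 1) ∧ v.2 - u.2 ∈ A2) ∨
  (u.1 = (0, 1) ∧ v.1 = (1, 1) ∧ v.2 - u.2 ∈ A1)

/-- The 4-partite graph of the Sidon-set construction. -/
def sidonGraph {n : ℕ} (A1 A2 : Finset (ZMod n)) : SimpleGraph (SidonV n) where
  Adj u v := sidonRel A1 A2 u v ∨ sidonRel A1 A2 v u
  symm := ⟨by intro u v h; tauto⟩
  loopless := ⟨by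
    intro v h
    rcases h with h | h <;>
      rcases h with ⟨h1, h2, -⟩ | ⟨h1, h2, -⟩ | ⟨h1, h2, -⟩ | ⟨h1, h2, -⟩ <;>
        rw [h1] at h2 <;> exact absurd h2 (by decide)⟩

/-- The colour of a pair: the tag records whether it is an `A1`-type edge
(first class-coordinates differ) or an `A2`-type edge, and the second component
is the difference along the orientation from lower to higher rank. -/
def sidonColFun {n : ℕ} (u v : SidonV n) : Fin 2 × ZMod n :=
  ((if u.1.1 = v.1.1 then 1 else 0),
   if sidonRank u < sidonRank v then v.2 - u.2
   else if sidonRank v < sidonRank u then u.2 - v.2 else 0)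

lemma sidonColFun_symm {n : ℕ} (u v : SidonV n) : sidonColFun u v = sidonColFun v u := by
  unfold sidonColFun
  refine Prod.ext ?_ ?_
  · by_cases h : u.1.1 = v.1.1 <;> simp [h, eq_comm]
  · rcases lt_trichotomy (sidonRank u) (sidonRank v) with h | h | h <;>
      first | simp [h, lt_asymm h, lt_irrefl] | simp [h, lt_irrefl]

/-- The edge-colouring of the Sidon construction, as a function on unordered pairs. -/
def sidonCol {n : ℕ} : Sym2 (SidonV n) → Fin 2 × ZMod n :=
  Sym2.lift ⟨fun u v => sidonColFun u v, sidonColFun_symm⟩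

lemma sidon_key {n : ℕ} (A1 A2 : Finset (ZMod n)) (v x y : SidonV n)
    (hx : (sidonGraph A1 A2).Adj v x) (hy : (sidonGraph A1 A2).Adj v y)
    (hcol : sidonColFun v x = sidonColFun v y) : x = y := by
  obtain ⟨pv, v2⟩ := v
  obtain ⟨px, x2⟩ := x
  obtain ⟨py, y2⟩ := y
  rcases hx with (⟨e1,e2,m1⟩|⟨e1,e2,m1⟩|⟨e1,e2,m1⟩|⟨e1,e2,m1⟩)|(⟨e1,e2,m1⟩|⟨e1,e2,m1⟩|⟨e1,e2,m1⟩|⟨e1,e2,m1⟩) <;>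
  rcases hy with (⟨f1,f2,m2⟩|⟨f1,f2,m2⟩|⟨f1,f2,m2⟩|⟨f1,f2,m2⟩)|(⟨f1,f2,m2⟩|⟨f1,f2,m2⟩|⟨f1,f2,m2⟩|⟨f1,f2,m2⟩) <;>
  simp only at e1 e2 f1 f2 <;> subst_vars <;>
  simp_all [sidonColFun, sidonRank, Prod.ext_iff, Fin.ext_iff]

lemma sidon_proper {n : ℕ} (A1 A2 : Finset (ZMod n)) :
    ProperColoring (sidonGraph A1 A2) (sidonCol (n := n)) := by
  intro e f he hf hef hshare
  obtain ⟨v, hve, hvf⟩ := hshare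
  induction e using Sym2.ind with | _ a b =>
  induction f using Sym2.ind with | _ c d =>
  rw [SimpleGraph.mem_edgeSet] at he hf
  rw [Sym2.mem_iff] at hve hvf
  intro hcol
  simp only [sidonCol, Sym2.lift_mk] at hcol
  apply hef
  rcases hve with rfl | rfl <;> rcases hvf with rfl | rfl
  · rw [sidon_key A1 A2 v b d he hf hcol]
  · rw [sidonColFun_symm c v] at hcol
    rw [sidon_key A1 A2 v b c he hf.symm hcol, Sym2.eq_swap]
  · rw [sidonColFun_symm a v] at hcol
    rw [sidon_key A1 A2 v a d he.symm hf hcol, Sym2.eq_swap]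
  · rw [sidonColFun_symm a v, sidonColFun_symm c v] at hcol
    rw [sidon_key A1 A2 v a c he.symm hf.symm hcol, Sym2.eq_swap]

set_option maxHeartbeats 3200000 in
lemma sidon_no_rainbow {n : ℕ} (A A1 A2 : Finset (ZMod n))
    (hSidon : ∀ a b a' b' : ZMod n, a ∈ A → b ∈ A → a' ∈ A → b' ∈ A →
      a + b = a' + b' → (a = a' ∧ b = b') ∨ (a = b' ∧ b = a'))
    (hpart : A1 ∪ A2 = A) (hdisj : Disjoint A1 A2) :
    ¬ HasRainbowCycle (sidonGraph A1 A2) (sidonCol (n := n)) 4 := by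
  rintro ⟨u, w, hcyc, hlen, hnd⟩
  clear hcyc
  have hA1 : ∀ {x : ZMod n}, x ∈ A1 → x ∈ A := fun h => hpart ▸ Finset.mem_union_left _ h
  have hA2 : ∀ {x : ZMod n}, x ∈ A2 → x ∈ A := fun h => hpart ▸ Finset.mem_union_right _ h
  rcases w with _ | @⟨_, v1, _, h1, w⟩
  · simp at hlen
  rcases w with _ | @⟨_, v2, _, h2, w⟩
  · simp at hlen
  rcases w with _ | @⟨_, v3, _, h3, w⟩
  · simp at hlen
  rcases w with _ | @⟨_, v4, _, h4, w⟩
  · simp at hlen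
  rcases w with _ | @⟨_, v5, _, h5, w⟩
  case cons => simp [Walk.length_cons] at hlen
  simp only [Walk.edges_cons, Walk.edges_nil, List.map_cons, List.map_nil] at hnd
  clear hlen
  replace h1 : sidonRel A1 A2 u v1 ∨ sidonRel A1 A2 v1 u := h1
  replace h2 : sidonRel A1 A2 v1 v2 ∨ sidonRel A1 A2 v2 v1 := h2
  replace h3 : sidonRel A1 A2 v2 v3 ∨ sidonRel A1 A2 v3 v2 := h3
  replace h4 : sidonRel A1 A2 v3 u ∨ sidonRel A1 A2 u v3 := h4
  obtain ⟨⟨i0, j0⟩, x0⟩ := u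
  obtain ⟨⟨i1, j1⟩, x1⟩ := v1
  obtain ⟨⟨i2, j2⟩, x2⟩ := v2
  obtain ⟨⟨i3, j3⟩, x3⟩ := v3
  fin_cases i0 <;> fin_cases j0 <;> fin_cases i1 <;> fin_cases j1 <;>
    simp only [sidonRel, Prod.mk.injEq, Fin.ext_iff, Fin.val_zero, Fin.val_one,
      zero_ne_one, one_ne_zero, false_and, and_false, true_and, and_true, or_false,
      false_or, eq_self_iff_true] at h1 <;>
  fin_cases i2 <;> fin_cases j2 <;>
    simp only [sidonRel, Prod.mk.injEq, Fin.ext_iff, Fin.val_zero, Fin.val_one,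
      zero_ne_one, one_ne_zero, false_and, and_false, true_and, and_true, or_false,
      false_or, eq_self_iff_true] at h2 <;>
  fin_cases i3 <;> fin_cases j3 <;>
    simp only [sidonRel, Prod.mk.injEq, Fin.ext_iff, Fin.val_zero, Fin.val_one,
      zero_ne_one, one_ne_zero, false_and, and_false, true_and, and_true, or_false,
      false_or, eq_self_iff_true] at h3 h4 <;>
  simp only [sidonCol, Sym2.lift_mk, sidonColFun, sidonRank, Fin.val_zero, Fin.val_one,
    List.nodup_cons, List.mem_cons, List.mem_singleton, List.not_mem_nil, List.nodup_nil,
    Prod.mk.injEq, Fin.ext_iff] at hnd <;>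
  norm_num at hnd <;>
  first
  | (refine absurd (hSidon _ _ _ _
      (by first | exact hA1 h1 | exact hA2 h1) (by first | exact hA1 h2 | exact hA2 h2)
      (by first | exact hA1 h3 | exact hA2 h3) (by first | exact hA1 h4 | exact hA2 h4)
      ?_) ?_
     ;ring
     ;rintro (⟨e,e'⟩|⟨e,e'⟩) <;> simp_all [Finset.disjoint_left])
  | (refine absurd (hSidon _ _ _ _
      (by first | exact hA1 h1 | exact hA2 h1) (by first | exact hA1 h3 | exact hA2 h3)
      (by first | exact hA1 h2 | exact hA2 h2) (by first | exact hA1 h4 | exact hA2 h4)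
      ?_) ?_
     ;ring
     ;rintro (⟨e,e'⟩|⟨e,e'⟩) <;> simp_all [Finset.disjoint_left])
  | (refine absurd (hSidon _ _ _ _
      (by first | exact hA1 h1 | exact hA2 h1) (by first | exact hA1 h4 | exact hA2 h4)
      (by first | exact hA1 h2 | exact hA2 h2) (by first | exact hA1 h3 | exact hA2 h3)
      ?_) ?_
     ;ring
     ;rintro (⟨e,e'⟩|⟨e,e'⟩) <;> simp_all [Finset.disjoint_left])
/-- if `A` is a Sidon set in `ZMod n` partitioned into `A1` and `A2`,
then the graph of the Sidon construction is properly edge-coloured and contains no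
rainbow 4-cycle. -/
theorem sidon_construction_proper_and_no_rainbow_C4 (n : ℕ) (hn : 0 < n)
    (A A1 A2 : Finset (ZMod n))
    (hSidon : ∀ a b a' b' : ZMod n, a ∈ A → b ∈ A → a' ∈ A → b' ∈ A →
      a + b = a' + b' → (a = a' ∧ b = b') ∨ (a = b' ∧ b = a'))
    (hpart : A1 ∪ A2 = A) (hdisj : Disjoint A1 A2) :
    ProperColoring (sidonGraph A1 A2) (sidonCol (n := n)) ∧
      ¬ HasRainbowCycle (sidonGraph A1 A2) (sidonCol (n := n)) 4 := by
  exact ⟨sidon_proper A1 A2, sidon_no_rainbow A A1 A2 hSidon hpart hdisj⟩
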